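/- Let α be an irrational of finite type τ. Then for every ε > 0 there is a constant c = c(α,ε) such that Σ_{h=1}^m 1/(h·‖hα‖) ≤ c·m^{τ−1+ε} for all positive integers m. -/

import Mathlib

/-- Distance from a real number to the nearest integer. -/
noncomputable def nint (t : ℝ) : ℝ := |t - round t|

open Finset Real

lemma nint_nonneg (t : ℝ) : 0 ≤ nint t := abs_nonneg _

lemma nint_le_half (t : ℝ) : nint t ≤ 1 / 2 := abs_sub_round t

lemma nint_le (t : ℝ) (z : ℤ) : nint t ≤ |t - z| := round_le t z

/-- Dirichlet pigeonhole: some `q ≤ N` has `‖qα‖ ≤ 1/N`. -/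
lemma pigeon (α : ℝ) (N : ℕ) (hN : 1 ≤ N) :
    ∃ q : ℕ, 1 ≤ q ∧ q ≤ N ∧ nint (q * α) ≤ 1 / N := by
  have hNR : (0:ℝ) < N := by exact_mod_cast hN
  have hmaps : ∀ h ∈ Finset.range (N + 1),
      (⌊(N : ℝ) * Int.fract (h * α)⌋₊ : ℕ) ∈ Finset.range N := by
    intro h _
    rw [Finset.mem_range, Nat.floor_lt (mul_nonneg hNR.le (Int.fract_nonneg _))]
    have := Int.fract_lt_one ((h : ℝ) * α)
    calc (N : ℝ) * Int.fract (h * α) < N * 1 := by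
          exact mul_lt_mul_of_pos_left this hNR
      _ = N := by ring
  obtain ⟨a, ha, b, hb, hab, heq⟩ :=
    Finset.exists_ne_map_eq_of_card_lt_of_maps_to
      (by simp : (Finset.range N).card < (Finset.range (N+1)).card) hmaps
  rw [Finset.mem_range] at ha hb
  -- key step for a pair a < b
  have key : ∀ a b : ℕ, a < b → b ≤ N →
      ⌊(N : ℝ) * Int.fract (a * α)⌋₊ = ⌊(N : ℝ) * Int.fract (b * α)⌋₊ →
      ∃ q : ℕ, 1 ≤ q ∧ q ≤ N ∧ nint (q * α) ≤ 1 / N := by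
    intro a b hlt hbN hfl
    refine ⟨b - a, by omega, by omega, ?_⟩
    have hcast : ((b - a : ℕ) : ℝ) = (b : ℝ) - a := by
      push_cast [Nat.cast_sub hlt.le]; ring
    have hdiff : |Int.fract ((b:ℝ) * α) - Int.fract ((a:ℝ) * α)| < 1 / N := by
      set x := (N : ℝ) * Int.fract ((a:ℝ) * α) with hx
      set y := (N : ℝ) * Int.fract ((b:ℝ) * α) with hy
      have hx0 : 0 ≤ x := mul_nonneg hNR.le (Int.fract_nonneg _)
      have hy0 : 0 ≤ y := mul_nonneg hNR.le (Int.fract_nonneg _)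
      have h1 : (⌊x⌋₊ : ℝ) ≤ x := Nat.floor_le hx0
      have h2 : x < ⌊x⌋₊ + 1 := Nat.lt_floor_add_one x
      have h3 : (⌊y⌋₊ : ℝ) ≤ y := Nat.floor_le hy0
      have h4 : y < ⌊y⌋₊ + 1 := Nat.lt_floor_add_one y
      have hfl' : (⌊x⌋₊ : ℝ) = (⌊y⌋₊ : ℝ) := by exact_mod_cast hfl
      have hxy : |y - x| < 1 := by rw [abs_lt]; constructor <;> linarith
      have h5 : |Int.fract ((b:ℝ) * α) - Int.fract ((a:ℝ) * α)| = |y - x| / N := by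
        have hyx : y - x = (N:ℝ) * (Int.fract ((b:ℝ) * α) - Int.fract ((a:ℝ) * α)) := by
          rw [hx, hy]; ring
        rw [hyx, abs_mul, abs_of_pos hNR]
        field_simp
      rw [h5]
      exact div_lt_div_of_pos_right hxy hNR
    have : nint (((b - a : ℕ) : ℝ) * α) ≤
        |Int.fract ((b:ℝ) * α) - Int.fract ((a:ℝ) * α)| := by
      have h6 := nint_le (((b - a : ℕ) : ℝ) * α) (⌊(b:ℝ) * α⌋ - ⌊(a:ℝ) * α⌋)
      refine h6.trans_eq ?_
      congr 1
      rw [hcast, Int.fract, Int.fract]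
      push_cast
      ring
    exact this.trans hdiff.le
  rcases lt_or_gt_of_ne hab with h | h
  · exact key a b h (by omega) heq
  · exact key b a h (by omega) heq.symm

lemma tau_ge_one (α : ℝ) (τ : ℝ)
    (htype : ∀ ε : ℝ, 0 < ε → ∃ c₀ : ℝ, 0 < c₀ ∧ ∀ q : ℕ, 0 < q →
      c₀ / (q : ℝ) ^ (τ + ε) ≤ nint (q * α)) : 1 ≤ τ := by
  by_contra hlt
  push_neg at hlt
  set ε' : ℝ := (1 - τ) / 2 with hε'
  have hε'pos : 0 < ε' := by rw [hε']; linarith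
  obtain ⟨c₀, hc₀, hb⟩ := htype ε' hε'pos
  set σ : ℝ := τ + ε' with hσ
  have hσ1 : σ < 1 := by rw [hσ, hε']; linarith
  -- choose N large
  obtain ⟨N₀, hN₀⟩ := exists_nat_gt (max (1 / c₀) ((1 / c₀) ^ (1 / (1 - σ))))
  set N : ℕ := max N₀ 1 with hNdef
  have hN1 : 1 ≤ N := le_max_right _ _
  have hNR : (1:ℝ) ≤ N := by exact_mod_cast hN1
  have hNR0 : (0:ℝ) < N := by linarith
  have hNge : (N₀ : ℝ) ≤ N := by exact_mod_cast le_max_left _ _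
  obtain ⟨q, hq1, hqN, hqa⟩ := pigeon α N hN1
  have hq0 : (0:ℝ) < q := by exact_mod_cast hq1
  have hqR : (q:ℝ) ≤ N := by exact_mod_cast hqN
  have hlow := hb q (by omega)
  -- c₀ ≤ q^σ / N
  have hqσ : (0:ℝ) < (q:ℝ) ^ σ := rpow_pos_of_pos hq0 _
  have hkey : c₀ ≤ (q:ℝ) ^ σ / N := by
    have := hlow.trans hqa
    rw [div_le_div_iff₀ hqσ hNR0] at this
    rw [le_div_iff₀ hNR0]
    linarith
  rcases le_or_gt σ 0 with hσ0 | hσ0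
  · have h1 : (q:ℝ) ^ σ ≤ 1 := rpow_le_one_of_one_le_of_nonpos (by exact_mod_cast hq1) hσ0
    have h2 : c₀ ≤ 1 / N := hkey.trans (by gcongr)
    have h3 : (1:ℝ) / c₀ < N := lt_of_le_of_lt (le_max_left _ _) (hN₀.trans_le hNge)
    rw [le_div_iff₀ hNR0] at h2
    rw [div_lt_iff₀ hc₀] at h3
    nlinarith
  · have h1 : (q:ℝ) ^ σ ≤ (N:ℝ) ^ σ := by gcongr
    have h2 : c₀ ≤ (N:ℝ) ^ σ / N := hkey.trans (by gcongr)
    -- N^(1-σ) > 1/c₀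
    have h3 : (1 / c₀) ^ (1 / (1 - σ)) < (N:ℝ) := lt_of_le_of_lt (le_max_right _ _) (hN₀.trans_le hNge)
    have h4 : ((1 / c₀) ^ (1 / (1 - σ))) ^ (1 - σ) < (N:ℝ) ^ (1 - σ) := by
      apply rpow_lt_rpow (by positivity) h3 (by linarith)
    have h5 : ((1 / c₀ : ℝ) ^ (1 / (1 - σ))) ^ (1 - σ) = 1 / c₀ := by
      rw [← rpow_mul (by positivity), one_div_mul_cancel (by linarith : (1:ℝ) - σ ≠ 0), rpow_one]
    rw [h5, div_lt_iff₀ hc₀] at h4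
    have hpσ : (0:ℝ) < (N:ℝ) ^ σ := rpow_pos_of_pos hNR0 _
    have hp1σ : (0:ℝ) < (N:ℝ) ^ (1 - σ) := rpow_pos_of_pos hNR0 _
    rw [le_div_iff₀ hNR0] at h2
    have hNs : (N:ℝ) ^ σ * (N:ℝ) ^ (1 - σ) = N := by
      rw [← rpow_add hNR0, show σ + (1 - σ) = 1 by ring, rpow_one]
    nlinarith [mul_lt_mul_of_pos_left h4 hpσ]

/-- MVT step: `p (n+1)^(p-1) ≤ (n+1)^p - n^p` for `0 < p ≤ 1`. -/
lemma mvt_step {p : ℝ} (hp0 : 0 < p) (hp1 : p ≤ 1) (n : ℕ) (hn : 1 ≤ n) :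
    p * ((n:ℝ) + 1) ^ (p - 1) ≤ ((n:ℝ) + 1) ^ p - (n:ℝ) ^ p := by
  have hn0 : (1:ℝ) ≤ n := by exact_mod_cast hn
  have hlt : (n:ℝ) < (n:ℝ) + 1 := by linarith
  obtain ⟨ξ, hξ, hslope⟩ := exists_hasDerivAt_eq_slope (fun x : ℝ => x ^ p)
    (fun x : ℝ => p * x ^ (p - 1)) hlt
    (fun x hx => by
      have hx0 : x ≠ 0 := by
        rcases Set.mem_Icc.mp hx with ⟨h1, _⟩; intro h; rw [h] at h1; linarith
      exact (Real.continuousAt_rpow_const x p (Or.inl hx0)).continuousWithinAt)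
    (fun x hx => by
      have hx0 : x ≠ 0 := by
        rcases Set.mem_Ioo.mp hx with ⟨h1, _⟩; intro h; rw [h] at h1; linarith
      exact Real.hasDerivAt_rpow_const (Or.inl hx0))
  rcases Set.mem_Ioo.mp hξ with ⟨hξ1, hξ2⟩
  have hξ0 : (0:ℝ) < ξ := by linarith
  have hmono : ((n:ℝ) + 1) ^ (p - 1) ≤ ξ ^ (p - 1) :=
    Real.rpow_le_rpow_of_nonpos hξ0 hξ2.le (by linarith)
  have : p * ((n:ℝ) + 1) ^ (p - 1) ≤ p * ξ ^ (p - 1) := by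
    exact mul_le_mul_of_nonneg_left hmono hp0.le
  rw [hslope] at this
  have hden : ((n:ℝ) + 1) - n = 1 := by ring
  rw [hden, div_one] at this
  exact this

/-- Power sum bound: for `β > -1`, `∑_{j=1}^m j^β ≤ B m^(β+1)`. -/
lemma sum_rpow_le {β : ℝ} (hβ : -1 < β) :
    ∃ B : ℝ, 0 < B ∧ ∀ m : ℕ, 1 ≤ m →
      ∑ j ∈ Finset.Icc 1 m, (j:ℝ) ^ β ≤ B * (m:ℝ) ^ (β + 1) := by
  rcases le_or_gt 0 β with hβ0 | hβ0
  · refine ⟨1, one_pos, fun m hm => ?_⟩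
    have hmR : (1:ℝ) ≤ m := by exact_mod_cast hm
    calc ∑ j ∈ Finset.Icc 1 m, (j:ℝ) ^ β ≤ ∑ j ∈ Finset.Icc 1 m, (m:ℝ) ^ β := by
          apply Finset.sum_le_sum
          intro j hj
          rcases Finset.mem_Icc.mp hj with ⟨hj1, hj2⟩
          gcongr
          all_goals first | linarith | exact_mod_cast hj2
      _ = (m:ℝ) * (m:ℝ) ^ β := by
          rw [Finset.sum_const, Nat.card_Icc]
          simp [nsmul_eq_mul]
      _ = 1 * (m:ℝ) ^ (β + 1) := by
          rw [one_mul, add_comm, Real.rpow_add (by linarith) 1 β, Real.rpow_one]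
  · refine ⟨1 / (β + 1), div_pos one_pos (by linarith), ?_⟩
    intro m hm
    induction m with
    | zero => omega
    | succ n ih =>
      rcases Nat.eq_or_lt_of_le hm with hm1 | hm1
      · simp only [← hm1]
        norm_num
        rw [one_le_inv_iff₀]
        constructor <;> linarith
      · have hn1 : 1 ≤ n := by omega
        have hnR : (1:ℝ) ≤ n := by exact_mod_cast hn1
        have hstep := mvt_step (by linarith : (0:ℝ) < β + 1) (by linarith) n hn1
        have hIH := ih hn1
        rw [Finset.sum_Icc_succ_top (by omega : 1 ≤ n + 1)]
        have hc : ((n + 1 : ℕ) : ℝ) = (n:ℝ) + 1 := by push_cast; ring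
        rw [hc]
        rw [show β + 1 - 1 = β by ring] at hstep
        have hkey : ((n:ℝ) + 1) ^ β ≤ (1 / (β + 1)) * (((n:ℝ) + 1) ^ (β + 1) - (n:ℝ) ^ (β + 1)) := by
          calc ((n:ℝ) + 1) ^ β = (1 / (β + 1)) * ((β + 1) * ((n:ℝ) + 1) ^ β) := by
                rw [one_div, ← mul_assoc, inv_mul_cancel₀ (by linarith : β + 1 ≠ 0), one_mul]
            _ ≤ (1 / (β + 1)) * (((n:ℝ) + 1) ^ (β + 1) - (n:ℝ) ^ (β + 1)) :=
                mul_le_mul_of_nonneg_left hstep (le_of_lt (div_pos one_pos (by linarith)))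
        calc (∑ j ∈ Finset.Icc 1 n, (j:ℝ) ^ β) + ((n:ℝ) + 1) ^ β
            ≤ 1 / (β + 1) * (n:ℝ) ^ (β + 1) + (1 / (β + 1)) * (((n:ℝ) + 1) ^ (β + 1) - (n:ℝ) ^ (β + 1)) := by
              exact add_le_add hIH hkey
          _ = 1 / (β + 1) * ((n:ℝ) + 1) ^ (β + 1) := by ring

set_option maxHeartbeats 1000000 in
lemma count_sum (α : ℝ) (c₀ β₁ : ℝ) (hc : 0 < c₀) (hβ : 1 ≤ β₁)
    (hsep : ∀ q : ℕ, 0 < q → c₀ / (q:ℝ) ^ β₁ ≤ nint (q * α)) (e2 : ℝ) (he2 : 0 < e2) :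
    ∃ A : ℝ, 0 < A ∧ ∀ N : ℕ, 1 ≤ N →
      ∑ h ∈ Finset.Icc 1 N, 1 / nint (h * α) ≤ A * (N:ℝ) ^ (β₁ * (1 + e2)) := by
  set D : ℝ := (2 * c₀) ^ e2 with hDdef
  have hD : 0 < D := rpow_pos_of_pos (by linarith) _
  set A : ℝ := (2 / c₀) * (1 + 1 / (D * e2)) with hAdef
  have hA : 0 < A := by
    apply mul_pos (by positivity)
    have : (0:ℝ) < 1 / (D * e2) := by positivity
    linarith
  refine ⟨A, hA, fun N hN => ?_⟩
  have hN0 : (0:ℝ) < N := by exact_mod_cast hN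
  have hN1 : (1:ℝ) ≤ N := by exact_mod_cast hN
  have hNβ : (0:ℝ) < (N:ℝ) ^ β₁ := rpow_pos_of_pos hN0 _
  set δ : ℝ := c₀ / (N:ℝ) ^ β₁ with hδdef
  have hδ : 0 < δ := div_pos hc hNβ
  set k : ℕ → ℕ := fun h => ⌊nint (h * α) / δ⌋₊ with hkdef
  set K : ℕ := ⌊1 / (2 * δ)⌋₊ with hKdef
  -- δ is a lower bound for nint (h α), h ≤ N
  have hδle : ∀ h ∈ Finset.Icc 1 N, δ ≤ nint (h * α) := by
    intro h hh
    rcases Finset.mem_Icc.mp hh with ⟨h1, h2⟩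
    have hh0 : (0:ℝ) < h := by exact_mod_cast h1
    have hhN : (h:ℝ) ≤ N := by exact_mod_cast h2
    have hmono : (h:ℝ) ^ β₁ ≤ (N:ℝ) ^ β₁ := by gcongr
    calc δ = c₀ / (N:ℝ) ^ β₁ := hδdef
      _ ≤ c₀ / (h:ℝ) ^ β₁ := by gcongr
      _ ≤ nint (h * α) := hsep h (by omega)
  have hnint : ∀ h ∈ Finset.Icc 1 N, 0 < nint (h * α) :=
    fun h hh => lt_of_lt_of_le hδ (hδle h hh)
  have hk1 : ∀ h ∈ Finset.Icc 1 N, 1 ≤ k h := by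
    intro h hh
    apply Nat.le_floor
    rw [Nat.cast_one, le_div_iff₀ hδ, one_mul]
    exact hδle h hh
  have hkδ : ∀ h ∈ Finset.Icc 1 N, (k h : ℝ) * δ ≤ nint (h * α) := by
    intro h hh
    have hfl : ((⌊nint ((h:ℝ) * α) / δ⌋₊ : ℕ) : ℝ) ≤ nint ((h:ℝ) * α) / δ :=
      Nat.floor_le (div_nonneg (nint_nonneg _) hδ.le)
    calc (k h : ℝ) * δ ≤ (nint (h * α) / δ) * δ := by
          apply mul_le_mul_of_nonneg_right hfl hδ.le
      _ = nint (h * α) := by field_simp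
  have hkK : ∀ h ∈ Finset.Icc 1 N, k h ≤ K := by
    intro h hh
    apply Nat.floor_le_floor
    rw [div_le_div_iff₀ hδ (by linarith)]
    have := nint_le_half ((h:ℝ) * α)
    nlinarith
  -- fiber cardinality at most 2
  have hcard : ∀ b : ℕ, ((Finset.Icc 1 N).filter (fun h => k h = b)).card ≤ 2 := by
    intro b
    by_contra hgt
    push_neg at hgt
    obtain ⟨x, y, z, hx, hy, hz, hxy, hxz, hyz⟩ := Finset.two_lt_card_iff.mp hgt
    set S := (Finset.Icc 1 N).filter (fun h => k h = b) with hS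
    set f : ℕ → ℝ := fun h => (h:ℝ) * α - round ((h:ℝ) * α) with hf
    have hbnd : ∀ u ∈ S, (b:ℝ) * δ ≤ |f u| ∧ |f u| < ((b:ℝ) + 1) * δ := by
      intro u hu
      rcases Finset.mem_filter.mp hu with ⟨huIcc, hub⟩
      have h0 : 0 ≤ nint ((u:ℝ) * α) / δ := div_nonneg (nint_nonneg _) hδ.le
      have := (Nat.floor_eq_iff h0).mp hub
      have habs : nint ((u:ℝ) * α) = |f u| := rfl
      constructor
      · rw [← habs]
        calc (b:ℝ) * δ ≤ (nint ((u:ℝ) * α) / δ) * δ := by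
              apply mul_le_mul_of_nonneg_right this.1 hδ.le
          _ = nint ((u:ℝ) * α) := by field_simp
      · rw [← habs]
        calc nint ((u:ℝ) * α) = (nint ((u:ℝ) * α) / δ) * δ := by field_simp
          _ < ((b:ℝ) + 1) * δ := by
              apply mul_lt_mul_of_pos_right this.2 hδ
    have pair : ∀ u v : ℕ, u ∈ S → v ∈ S → v < u → ((0 ≤ f u) ↔ (0 ≤ f v)) → False := by
      intro u v hu hv hvu hiff
      obtain ⟨hu1, hu2⟩ := hbnd u hu
      obtain ⟨hv1, hv2⟩ := hbnd v hv
      have huN := (Finset.mem_Icc.mp (Finset.mem_filter.mp hu).1).2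
      have hv1' := (Finset.mem_Icc.mp (Finset.mem_filter.mp hv).1).1
      have habs : |f u - f v| < δ := by
        by_cases hsgn : 0 ≤ f u
        · have hsgn' : 0 ≤ f v := hiff.mp hsgn
          rw [abs_of_nonneg hsgn] at hu1 hu2
          rw [abs_of_nonneg hsgn'] at hv1 hv2
          rw [abs_lt]; constructor <;> linarith
        · have hsgn' : ¬ (0 ≤ f v) := fun h => hsgn (hiff.mpr h)
          push_neg at hsgn hsgn'
          rw [abs_of_neg hsgn] at hu1 hu2
          rw [abs_of_neg hsgn'] at hv1 hv2
          rw [abs_lt]; constructor <;> linarith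
      set q : ℕ := u - v with hq
      have hq1 : 1 ≤ q := by omega
      have hqN : q ≤ N := by omega
      have hqcast : ((q:ℕ) : ℝ) = (u:ℝ) - v := by
        rw [hq]; push_cast [Nat.cast_sub hvu.le]; ring
      have hqα : nint ((q:ℝ) * α) ≤ |f u - f v| := by
        have h6 := nint_le ((q:ℝ) * α) (round ((u:ℝ) * α) - round ((v:ℝ) * α))
        refine h6.trans_eq ?_
        congr 1
        rw [hqcast, hf]
        push_cast
        ring
      have hlarge : δ ≤ nint ((q:ℝ) * α) := by
        have hq0 : (0:ℝ) < q := by exact_mod_cast hq1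
        have hqR : (q:ℝ) ≤ N := by exact_mod_cast hqN
        have hmono : (q:ℝ) ^ β₁ ≤ (N:ℝ) ^ β₁ := by gcongr
        calc δ = c₀ / (N:ℝ) ^ β₁ := hδdef
          _ ≤ c₀ / (q:ℝ) ^ β₁ := by gcongr
          _ ≤ nint ((q:ℝ) * α) := hsep q (by omega)
      linarith [hqα.trans_lt habs]
    have pair' : ∀ u v : ℕ, u ∈ S → v ∈ S → u ≠ v → ((0 ≤ f u) ↔ (0 ≤ f v)) → False := by
      intro u v hu hv hne hiff
      rcases lt_or_gt_of_ne hne with h | h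
      · exact pair v u hv hu h hiff.symm
      · exact pair u v hu hv h hiff
    by_cases s1 : 0 ≤ f x <;> by_cases s2 : 0 ≤ f y <;> by_cases s3 : 0 ≤ f z <;>
      first
        | exact pair' x y hx hy hxy (iff_of_true s1 s2)
        | exact pair' x y hx hy hxy (iff_of_false s1 s2)
        | exact pair' x z hx hz hxz (iff_of_true s1 s3)
        | exact pair' x z hx hz hxz (iff_of_false s1 s3)
        | exact pair' y z hy hz hyz (iff_of_true s2 s3)
        | exact pair' y z hy hz hyz (iff_of_false s2 s3)
  -- the main sum estimate
  have himg : (Finset.Icc 1 N).image k ⊆ Finset.Icc 1 K := by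
    intro b hb
    rw [Finset.mem_image] at hb
    obtain ⟨h, hh, rfl⟩ := hb
    exact Finset.mem_Icc.mpr ⟨hk1 h hh, hkK h hh⟩
  have step1 : ∑ h ∈ Finset.Icc 1 N, 1 / nint (h * α) ≤
      ∑ h ∈ Finset.Icc 1 N, (fun b : ℕ => 1 / ((b:ℝ) * δ)) (k h) := by
    apply Finset.sum_le_sum
    intro h hh
    have hk0 : (0:ℝ) < (k h : ℝ) * δ := by
      have := hk1 h hh
      have : (1:ℝ) ≤ (k h : ℝ) := by exact_mod_cast this
      nlinarith
    exact one_div_le_one_div_of_le hk0 (hkδ h hh)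
  have step2 : ∑ h ∈ Finset.Icc 1 N, (fun b : ℕ => 1 / ((b:ℝ) * δ)) (k h) ≤
      ∑ b ∈ Finset.Icc 1 K, 2 * (1 / ((b:ℝ) * δ)) := by
    rw [Finset.sum_comp (fun b : ℕ => 1 / ((b:ℝ) * δ)) k]
    calc ∑ b ∈ (Finset.Icc 1 N).image k,
          ((Finset.Icc 1 N).filter (fun h => k h = b)).card • (1 / ((b:ℝ) * δ))
        ≤ ∑ b ∈ (Finset.Icc 1 N).image k, 2 * (1 / ((b:ℝ) * δ)) := by
          apply Finset.sum_le_sum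
          intro b _
          rw [nsmul_eq_mul]
          apply mul_le_mul_of_nonneg_right _ (by positivity)
          exact_mod_cast hcard b
      _ ≤ ∑ b ∈ Finset.Icc 1 K, 2 * (1 / ((b:ℝ) * δ)) := by
          apply Finset.sum_le_sum_of_subset_of_nonneg himg
          intro b _ _
          positivity
  have step3 : ∑ b ∈ Finset.Icc 1 K, 2 * (1 / ((b:ℝ) * δ)) =
      (2 / δ) * ∑ b ∈ Finset.Icc 1 K, ((b:ℝ))⁻¹ := by
    rw [Finset.mul_sum]
    apply Finset.sum_congr rfl
    intro b hb
    have hb1 : 1 ≤ b := (Finset.mem_Icc.mp hb).1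
    have : (0:ℝ) < b := by exact_mod_cast hb1
    field_simp
  have hharm : ∑ b ∈ Finset.Icc 1 K, ((b:ℝ))⁻¹ ≤ 1 + Real.log K := by
    have h1 := harmonic_le_one_add_log K
    have h2 : ((harmonic K : ℚ) : ℝ) = ∑ b ∈ Finset.Icc 1 K, ((b:ℝ))⁻¹ := by
      rw [harmonic_eq_sum_Icc]
      push_cast
      rfl
    linarith [h2 ▸ h1]
  have hlogK : Real.log K ≤ (K:ℝ) ^ e2 / e2 := Real.log_le_rpow_div (Nat.cast_nonneg _) he2
  have hKM : (K:ℝ) ≤ (N:ℝ) ^ β₁ / (2 * c₀) := by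
    have h1 : (K:ℝ) ≤ 1 / (2 * δ) := Nat.floor_le (by positivity)
    refine h1.trans_eq ?_
    rw [hδdef]
    field_simp
  have hKe2 : (K:ℝ) ^ e2 ≤ (N:ℝ) ^ (β₁ * e2) / D := by
    calc (K:ℝ) ^ e2 ≤ ((N:ℝ) ^ β₁ / (2 * c₀)) ^ e2 := by
          gcongr
      _ = (N:ℝ) ^ (β₁ * e2) / D := by
          rw [Real.div_rpow hNβ.le (by linarith), ← Real.rpow_mul (Nat.cast_nonneg N), hDdef]
  have hNe2 : (1:ℝ) ≤ (N:ℝ) ^ (β₁ * e2) := by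
    apply Real.one_le_rpow hN1
    positivity
  have main : (2 / δ) * (1 + Real.log K) ≤ A * ((N:ℝ) ^ β₁ * (N:ℝ) ^ (β₁ * e2)) := by
    have h2δ : 2 / δ = (2 / c₀) * (N:ℝ) ^ β₁ := by
      rw [hδdef]
      field_simp
    have hlog2 : 1 + Real.log K ≤ (1 + 1 / (D * e2)) * (N:ℝ) ^ (β₁ * e2) := by
      have hchain : Real.log K ≤ ((N:ℝ) ^ (β₁ * e2) / D) / e2 := by
        refine hlogK.trans ?_
        gcongr
      have hexp : ((N:ℝ) ^ (β₁ * e2) / D) / e2 = (N:ℝ) ^ (β₁ * e2) * (1 / (D * e2)) := by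
        field_simp
      rw [hexp] at hchain
      nlinarith [hNe2, hchain, mul_pos hD he2]
    calc (2 / δ) * (1 + Real.log K)
        ≤ ((2 / c₀) * (N:ℝ) ^ β₁) * ((1 + 1 / (D * e2)) * (N:ℝ) ^ (β₁ * e2)) := by
          rw [← h2δ]
          apply mul_le_mul_of_nonneg_left hlog2 (by positivity)
      _ = A * ((N:ℝ) ^ β₁ * (N:ℝ) ^ (β₁ * e2)) := by rw [hAdef]; ring
  have hfin : (N:ℝ) ^ β₁ * (N:ℝ) ^ (β₁ * e2) = (N:ℝ) ^ (β₁ * (1 + e2)) := by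
    rw [← Real.rpow_add hN0]
    congr 1
    ring
  calc ∑ h ∈ Finset.Icc 1 N, 1 / nint (h * α)
      ≤ (2 / δ) * ∑ b ∈ Finset.Icc 1 K, ((b:ℝ))⁻¹ := by
        rw [← step3]; exact step1.trans step2
    _ ≤ (2 / δ) * (1 + Real.log K) := by
        apply mul_le_mul_of_nonneg_left hharm (by positivity)
    _ ≤ A * ((N:ℝ) ^ β₁ * (N:ℝ) ^ (β₁ * e2)) := main
    _ = A * (N:ℝ) ^ (β₁ * (1 + e2)) := by rw [hfin]

/-- If α is an irrational of finite type τ, then for every ε > 0 there is c > 0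
with Σ_{h=1}^m 1/(h‖hα‖) ≤ c m^{τ−1+ε} for all m ≥ 1. -/
theorem stmt_11 (α : ℝ) (hα : Irrational α) (τ : ℝ)
    (htype : ∀ ε : ℝ, 0 < ε → ∃ c₀ : ℝ, 0 < c₀ ∧ ∀ q : ℕ, 0 < q →
      c₀ / (q : ℝ) ^ (τ + ε) ≤ nint (q * α)) :
    ∀ ε : ℝ, 0 < ε → ∃ c : ℝ, 0 < c ∧ ∀ m : ℕ, 1 ≤ m →
      ∑ h ∈ Finset.Icc 1 m, 1 / ((h : ℝ) * nint (h * α)) ≤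
        c * (m : ℝ) ^ (τ - 1 + ε) := by
  intro ε hε
  have hτ : 1 ≤ τ := tau_ge_one α τ htype
  obtain ⟨c₀, hc₀, hb⟩ := htype (ε / 4) (by linarith)
  set β₁ : ℝ := τ + ε / 4 with hβ₁def
  have hβ₁ : 1 ≤ β₁ := by rw [hβ₁def]; linarith
  have hβ₁0 : 0 < β₁ := by linarith
  set e2 : ℝ := (ε / 4) / β₁ with he2def
  have he2 : 0 < e2 := by rw [he2def]; positivity
  obtain ⟨A, hA, hS⟩ := count_sum α c₀ β₁ hc₀ hβ₁ hb e2 he2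
  have hexp : β₁ * (1 + e2) = τ + ε / 2 := by
    have h1 : β₁ * e2 = ε / 4 := by
      rw [he2def]; field_simp
    have h2 : β₁ * (1 + e2) = β₁ + β₁ * e2 := by ring
    rw [h2, h1, hβ₁def]; ring
  rw [hexp] at hS
  obtain ⟨B, hB, hsum⟩ := sum_rpow_le (show (-1:ℝ) < τ - 2 + ε / 2 by linarith)
  rw [show τ - 2 + ε / 2 + 1 = τ - 1 + ε / 2 by ring] at hsum
  refine ⟨A * (1 + B), mul_pos hA (by linarith), ?_⟩
  intro m hm
  have hm0 : (0:ℝ) < m := by exact_mod_cast hm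
  have hm1 : (1:ℝ) ≤ m := by exact_mod_cast hm
  set a : ℕ → ℝ := fun h => 1 / nint ((h:ℝ) * α) with hadef
  have ha0 : ∀ h : ℕ, 0 ≤ a h := fun h => by
    rw [hadef]; exact div_nonneg zero_le_one (nint_nonneg _)
  set w : ℕ → ℝ := fun j => 1 / (j:ℝ) - 1 / ((j:ℝ) + 1) with hwdef
  have hw0 : ∀ j : ℕ, 1 ≤ j → 0 ≤ w j := by
    intro j hj
    have hj0 : (0:ℝ) < j := by exact_mod_cast hj
    rw [hwdef]
    simp only [sub_nonneg]
    gcongr <;> linarith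
  -- telescoping identity
  have htel : ∀ h ∈ Finset.Icc 1 m, (1:ℝ) / (h:ℝ) = 1 / (m:ℝ) + ∑ j ∈ Finset.Ico h m, w j := by
    intro h hh
    rcases Finset.mem_Icc.mp hh with ⟨h1, h2⟩
    have h0 : (0:ℝ) < h := by exact_mod_cast h1
    have hts : ∑ j ∈ Finset.Ico h m,
        ((1:ℝ) / ((j + 1 : ℕ):ℝ) - 1 / ((j:ℕ):ℝ)) = 1 / (m:ℝ) - 1 / (h:ℝ) := by
      rw [Finset.sum_Ico_eq_sub _ h2,
        Finset.sum_range_sub (fun j : ℕ => (1:ℝ) / (j:ℝ)),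
        Finset.sum_range_sub (fun j : ℕ => (1:ℝ) / (j:ℝ))]
      ring
    have hcongr : ∑ j ∈ Finset.Ico h m, w j =
        -∑ j ∈ Finset.Ico h m, ((1:ℝ) / ((j + 1 : ℕ):ℝ) - 1 / (j:ℝ)) := by
      rw [← Finset.sum_neg_distrib]
      apply Finset.sum_congr rfl
      intro j _
      show (1:ℝ) / (j:ℝ) - 1 / ((j:ℝ) + 1) = _
      push_cast
      ring
    rw [hcongr, hts]
    ring
  -- rewrite the sum
  have hterm : ∀ h : ℕ, 1 / ((h:ℝ) * nint (h * α)) = a h * (1 / (h:ℝ)) := by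
    intro h
    show 1 / ((h:ℝ) * nint (h * α)) = (1 / nint ((h:ℝ) * α)) * (1 / (h:ℝ))
    rw [one_div, mul_inv, one_div, one_div]
    ring
  have hsplit : ∑ h ∈ Finset.Icc 1 m, 1 / ((h : ℝ) * nint (h * α)) =
      (∑ h ∈ Finset.Icc 1 m, a h) * (1 / (m:ℝ)) +
        ∑ h ∈ Finset.Icc 1 m, ∑ j ∈ Finset.Ico h m, a h * w j := by
    have h1 : ∀ h ∈ Finset.Icc 1 m, 1 / ((h : ℝ) * nint (h * α)) =
        a h * (1 / (m:ℝ)) + ∑ j ∈ Finset.Ico h m, a h * w j := by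
      intro h hh
      rw [hterm h, htel h hh, mul_add, Finset.mul_sum]
    rw [Finset.sum_congr rfl h1, Finset.sum_add_distrib, ← Finset.sum_mul]
  -- swap the double sum
  have hswap : ∑ h ∈ Finset.Icc 1 m, ∑ j ∈ Finset.Ico h m, a h * w j =
      ∑ j ∈ Finset.Ico 1 m, (∑ h ∈ Finset.Icc 1 j, a h) * w j := by
    rw [← Finset.Ico_add_one_right_eq_Icc, Finset.sum_Ico_succ_top hm]
    rw [Finset.Ico_self, Finset.sum_empty, add_zero, Finset.sum_Ico_Ico_comm]
    apply Finset.sum_congr rfl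
    intro j _
    rw [Finset.Ico_add_one_right_eq_Icc, Finset.sum_mul]
  -- bound part 1
  have hpart1 : (∑ h ∈ Finset.Icc 1 m, a h) * (1 / (m:ℝ)) ≤ A * (m:ℝ) ^ (τ - 1 + ε / 2) := by
    have h1 := hS m hm
    calc (∑ h ∈ Finset.Icc 1 m, a h) * (1 / (m:ℝ))
        ≤ (A * (m:ℝ) ^ (τ + ε / 2)) * (1 / (m:ℝ)) := by
          apply mul_le_mul_of_nonneg_right h1 (by positivity)
      _ = A * (m:ℝ) ^ (τ - 1 + ε / 2) := by
          rw [show τ - 1 + ε / 2 = (τ + ε / 2) - 1 by ring, Real.rpow_sub hm0, Real.rpow_one]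
          field_simp
  -- bound part 2
  have hpart2 : ∑ j ∈ Finset.Ico 1 m, (∑ h ∈ Finset.Icc 1 j, a h) * w j ≤
      A * (B * (m:ℝ) ^ (τ - 1 + ε / 2)) := by
    have hstep : ∀ j ∈ Finset.Ico 1 m, (∑ h ∈ Finset.Icc 1 j, a h) * w j ≤
        A * (j:ℝ) ^ (τ - 2 + ε / 2) := by
      intro j hj
      rcases Finset.mem_Ico.mp hj with ⟨hj1, _⟩
      have hj0 : (0:ℝ) < j := by exact_mod_cast hj1
      have hjR : (1:ℝ) ≤ j := by exact_mod_cast hj1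
      have hwle : w j ≤ 1 / (j:ℝ) ^ 2 := by
        have hwj : w j = 1 / ((j:ℝ) * ((j:ℝ) + 1)) := by
          show (1:ℝ) / (j:ℝ) - 1 / ((j:ℝ) + 1) = _
          rw [div_sub_div _ _ (by linarith : (j:ℝ) ≠ 0) (by linarith : (j:ℝ) + 1 ≠ 0)]
          congr 1
          ring
        rw [hwj]
        apply one_div_le_one_div_of_le (by positivity)
        nlinarith
      have hSj := hS j hj1
      have hsum_nonneg : 0 ≤ ∑ h ∈ Finset.Icc 1 j, a h :=
        Finset.sum_nonneg fun h _ => ha0 h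
      calc (∑ h ∈ Finset.Icc 1 j, a h) * w j
          ≤ (A * (j:ℝ) ^ (τ + ε / 2)) * (1 / (j:ℝ) ^ 2) := by
            apply mul_le_mul hSj hwle (hw0 j hj1) (by positivity)
        _ = A * ((j:ℝ) ^ (τ + ε / 2) / (j:ℝ) ^ (2:ℝ)) := by
            rw [show ((2:ℝ)) = ((2:ℕ):ℝ) by norm_num, Real.rpow_natCast]
            ring
        _ = A * (j:ℝ) ^ (τ - 2 + ε / 2) := by
            rw [← Real.rpow_sub hj0, show τ + ε / 2 - 2 = τ - 2 + ε / 2 by ring]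
    calc ∑ j ∈ Finset.Ico 1 m, (∑ h ∈ Finset.Icc 1 j, a h) * w j
        ≤ ∑ j ∈ Finset.Ico 1 m, A * (j:ℝ) ^ (τ - 2 + ε / 2) :=
          Finset.sum_le_sum hstep
      _ ≤ ∑ j ∈ Finset.Icc 1 m, A * (j:ℝ) ^ (τ - 2 + ε / 2) := by
          apply Finset.sum_le_sum_of_subset_of_nonneg
          · rw [← Finset.Ico_add_one_right_eq_Icc]
            exact Finset.Ico_subset_Ico le_rfl (by omega)
          · intro j hj _
            have hj1 := (Finset.mem_Icc.mp hj).1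
            have : (0:ℝ) < j := by exact_mod_cast hj1
            positivity
      _ = A * ∑ j ∈ Finset.Icc 1 m, (j:ℝ) ^ (τ - 2 + ε / 2) := by rw [Finset.mul_sum]
      _ ≤ A * (B * (m:ℝ) ^ (τ - 1 + ε / 2)) := by
          apply mul_le_mul_of_nonneg_left (hsum m hm) hA.le
  -- combine
  calc ∑ h ∈ Finset.Icc 1 m, 1 / ((h : ℝ) * nint (h * α))
      = (∑ h ∈ Finset.Icc 1 m, a h) * (1 / (m:ℝ)) +
        ∑ j ∈ Finset.Ico 1 m, (∑ h ∈ Finset.Icc 1 j, a h) * w j := by rw [hsplit, hswap]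
    _ ≤ A * (m:ℝ) ^ (τ - 1 + ε / 2) + A * (B * (m:ℝ) ^ (τ - 1 + ε / 2)) :=
        add_le_add hpart1 hpart2
    _ = (A * (1 + B)) * (m:ℝ) ^ (τ - 1 + ε / 2) := by ring
    _ ≤ (A * (1 + B)) * (m:ℝ) ^ (τ - 1 + ε) := by
        apply mul_le_mul_of_nonneg_left _ (by positivity)
        apply Real.rpow_le_rpow_of_exponent_le hm1
        linarith
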